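/- Suppose κ = κ(l) > 0 satisfies, for all large l, the equation κ e^{κl}/cosh(κl) = c e^{−√3 l}/cosh(√3 l) + r(l) where c > 0 and |r(l)| ≤ C(κ² e^{−2κl}/cosh²(κl) + κ³ + κ² e^{−2√3 l} + e^{−2√8 l}), and suppose κ(l) → 0 as l → ∞. Then there exist constants C₁, C₂ > 0 such that C₁ e^{−2√3 l} ≤ κ(l) ≤ C₂ e^{−2√3 l} for all large l, and moreover κ(l) = 2c e^{−2√3 l} + O(e^{−2√8 l}) as l → ∞. -/

import Mathlib

set_option maxHeartbeats 1000000

open Real Filter Topology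

lemma exp_neg_sq (x : ℝ) : Real.exp (-x) ^ 2 = Real.exp (-(2*x)) := by
  rw [sq, ← Real.exp_add]; ring_nf

lemma aux_exp_cosh (x : ℝ) (hx : 0 ≤ x) :
    1 ≤ Real.exp x / Real.cosh x ∧ Real.exp x / Real.cosh x ≤ 2 ∧
    Real.exp x / Real.cosh x ≤ 1 + 2 * x := by
  have ha := Real.exp_pos x
  have hb := Real.exp_pos (-x)
  have hab : Real.exp x * Real.exp (-x) = 1 := by rw [← Real.exp_add]; simp
  have hba : Real.exp (-x) ≤ Real.exp x := Real.exp_le_exp.2 (by linarith)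
  have h2 : 1 - 2 * x ≤ Real.exp (-x) ^ 2 := by
    rw [exp_neg_sq]; have := Real.add_one_le_exp (-(2*x)); linarith
  have hcosh : Real.cosh x = (Real.exp x + Real.exp (-x)) / 2 := Real.cosh_eq x
  have hcp : (0:ℝ) < (Real.exp x + Real.exp (-x)) / 2 := by positivity
  refine ⟨?_, ?_, ?_⟩
  · rw [hcosh, le_div_iff₀ hcp]; linarith
  · rw [hcosh, div_le_iff₀ hcp]; linarith
  · rw [hcosh, div_le_iff₀ hcp]
    nlinarith [mul_nonneg hx ha.le, mul_nonneg hx hb.le]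

lemma aux_expneg_cosh (y : ℝ) (hy : 0 ≤ y) :
    Real.exp (-(2*y)) ≤ Real.exp (-y) / Real.cosh y ∧
    Real.exp (-y) / Real.cosh y ≤ 2 * Real.exp (-(2*y)) ∧
    |Real.exp (-y) / Real.cosh y - 2 * Real.exp (-(2*y))| ≤ 2 * Real.exp (-(4*y)) := by
  have ha := Real.exp_pos y
  have hb := Real.exp_pos (-y)
  have hab : Real.exp y * Real.exp (-y) = 1 := by rw [← Real.exp_add]; simp
  have hba : Real.exp (-y) ≤ Real.exp y := Real.exp_le_exp.2 (by linarith)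
  have h2 : Real.exp (-(2*y)) = Real.exp (-y) ^ 2 := (exp_neg_sq y).symm
  have h4 : Real.exp (-(4*y)) = Real.exp (-y) ^ 4 := by
    rw [show -((4:ℝ)*y) = -y + -y + -y + -y by ring, Real.exp_add, Real.exp_add,
      Real.exp_add]; ring
  have hcosh : Real.cosh y = (Real.exp y + Real.exp (-y)) / 2 := Real.cosh_eq y
  have hcp : (0:ℝ) < (Real.exp y + Real.exp (-y)) / 2 := by positivity
  have hup : Real.exp (-y) / Real.cosh y ≤ 2 * Real.exp (-(2*y)) := by
    rw [hcosh, h2, div_le_iff₀ hcp]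
    nlinarith [pow_pos hb 3]
  refine ⟨?_, hup, ?_⟩
  · rw [hcosh, h2, le_div_iff₀ hcp]
    nlinarith [mul_nonneg hb.le hb.le, mul_pos (mul_pos hb hb) hb]
  · rw [abs_le]
    constructor
    · have key : 2 * Real.exp (-y) ^ 2 - 2 * Real.exp (-y) ^ 4 ≤
          Real.exp (-y) / ((Real.exp y + Real.exp (-y)) / 2) := by
        rw [le_div_iff₀ hcp]
        nlinarith [pow_pos hb 5, pow_pos hb 3]
      rw [hcosh, h2, h4]; linarith
    · linarith [Real.exp_pos (-(4*y))]

lemma ev_exp {a ε : ℝ} (ha : 0 < a) (hε : 0 < ε) :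
    ∀ᶠ l in atTop, Real.exp (-(a*l)) ≤ ε := by
  have h1 : Tendsto (fun l : ℝ => a*l) atTop atTop :=
    Tendsto.const_mul_atTop ha tendsto_id
  have h : Tendsto (fun l : ℝ => Real.exp (-(a*l))) atTop (𝓝 0) :=
    Real.tendsto_exp_neg_atTop_nhds_zero.comp h1
  exact h.eventually_le_const hε

/-- Asymptotics of the solution of the implicit equation (6.10). -/
theorem implicit_eq_asymptotics (c C l₀ : ℝ) (κ r : ℝ → ℝ)
    (hc : 0 < c) (hC : 0 < C)
    (hpos : ∀ l ≥ l₀, 0 < κ l)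
    (heq : ∀ l ≥ l₀,
      κ l * Real.exp (κ l * l) / Real.cosh (κ l * l) =
        c * Real.exp (-(Real.sqrt 3) * l) / Real.cosh (Real.sqrt 3 * l) + r l)
    (hr : ∀ l ≥ l₀, |r l| ≤ C *
      ((κ l) ^ 2 * Real.exp (-2 * κ l * l) / (Real.cosh (κ l * l)) ^ 2
        + (κ l) ^ 3 + (κ l) ^ 2 * Real.exp (-2 * Real.sqrt 3 * l)
        + Real.exp (-2 * Real.sqrt 8 * l)))
    (hκ0 : Tendsto κ atTop (𝓝 0)) :
    (∃ C₁ > (0:ℝ), ∃ C₂ > (0:ℝ), ∃ L : ℝ, ∀ l ≥ L,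
        C₁ * Real.exp (-2 * Real.sqrt 3 * l) ≤ κ l ∧
        κ l ≤ C₂ * Real.exp (-2 * Real.sqrt 3 * l)) ∧
    (∃ C₃ : ℝ, ∃ L : ℝ, ∀ l ≥ L,
        |κ l - 2 * c * Real.exp (-2 * Real.sqrt 3 * l)| ≤
          C₃ * Real.exp (-2 * Real.sqrt 8 * l)) := by
  -- notation for the square roots and numeric facts
  set s3 := Real.sqrt 3 with hs3def
  set s8 := Real.sqrt 8 with hs8def
  have s3nn : 0 ≤ s3 := Real.sqrt_nonneg 3
  have s8nn : 0 ≤ s8 := Real.sqrt_nonneg 8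
  have h173 : (1.73:ℝ) ≤ s3 := by
    rw [hs3def, show (1.73:ℝ) = Real.sqrt (1.73^2) from (Real.sqrt_sq (by norm_num)).symm]
    exact Real.sqrt_le_sqrt (by norm_num)
  have h174 : s3 ≤ (1.74:ℝ) := by
    rw [hs3def, show (1.74:ℝ) = Real.sqrt (1.74^2) from (Real.sqrt_sq (by norm_num)).symm]
    exact Real.sqrt_le_sqrt (by norm_num)
  have h28 : (2.8:ℝ) ≤ s8 := by
    rw [hs8def, show (2.8:ℝ) = Real.sqrt (2.8^2) from (Real.sqrt_sq (by norm_num)).symm]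
    exact Real.sqrt_le_sqrt (by norm_num)
  have h283 : s8 ≤ (2.83:ℝ) := by
    rw [hs8def, show (2.83:ℝ) = Real.sqrt (2.83^2) from (Real.sqrt_sq (by norm_num)).symm]
    exact Real.sqrt_le_sqrt (by norm_num)
  have h38 : s3 ≤ s8 := by linarith
  have h83 : s8 ≤ 2*s3 := by linarith
  have hnum : 1 + 2*s8 ≤ 4*s3 := by linarith
  -- constants
  set C2 : ℝ := 2*(2*c + C) with hC2def
  have hC2 : 0 < C2 := by positivity
  set C3 : ℝ := 2*C2^2 + 2*c + 3*C*C2^2 + C with hC3def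
  -- the main eventual statement
  have main : ∀ᶠ l in atTop,
      ((c/4) * Real.exp (-2*s3*l) ≤ κ l ∧ κ l ≤ C2 * Real.exp (-2*s3*l)) ∧
      |κ l - 2*c*Real.exp (-2*s3*l)| ≤ C3 * Real.exp (-2*s8*l) := by
    have hκδ : ∀ᶠ l in atTop, κ l ≤ min 1 (1/(6*C)) := by
      refine hκ0.eventually_le_const ?_
      have : (0:ℝ) < 1/(6*C) := by positivity
      exact lt_min one_pos this
    have hev3 : ∀ᶠ l in atTop, Real.exp (-((2*s8 - 2*s3)*l)) ≤ c/(4*C) :=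
      ev_exp (by linarith) (by positivity)
    have hev4 : ∀ᶠ l in atTop, Real.exp (-((2*s3)*l)) ≤ c/(4*(3*C*C2^2)) :=
      ev_exp (by linarith) (by positivity)
    filter_upwards [eventually_ge_atTop l₀, eventually_ge_atTop (1:ℝ), hκδ, hev3, hev4]
      with l hl0 hl1 hκd hev3' hev4'
    have hlnn : (0:ℝ) ≤ l := by linarith
    have hKpos : 0 < κ l := hpos l hl0
    set K := κ l with hKdef
    have hK1 : K ≤ 1 := le_trans hκd (min_le_left _ _)
    have hK6 : K ≤ 1/(6*C) := le_trans hκd (min_le_right _ _)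
    set E3 := Real.exp (-2*s3*l) with hE3def
    set E8 := Real.exp (-2*s8*l) with hE8def
    have hE3pos : 0 < E3 := Real.exp_pos _
    have hE8pos : 0 < E8 := Real.exp_pos _
    -- basic ratio bounds
    obtain ⟨hA1, hA2, hA3⟩ := aux_exp_cosh (K*l) (by positivity)
    obtain ⟨hB1, hB2, hB3⟩ := aux_expneg_cosh (s3*l) (by positivity)
    have e23 : Real.exp (-(2*(s3*l))) = E3 := by rw [hE3def]; congr 1; ring
    have e43 : Real.exp (-(4*(s3*l))) = E3^2 := by
      rw [hE3def, sq, ← Real.exp_add]; congr 1; ring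
    rw [e23] at hB1 hB2 hB3
    rw [e43] at hB3
    set A := Real.exp (K*l) / Real.cosh (K*l) with hAdef
    set Bq := Real.exp (-(s3*l)) / Real.cosh (s3*l) with hBqdef
    -- the equation
    have hEq : K * A = c * Bq + r l := by
      have h := heq l hl0
      rw [mul_div_assoc, mul_div_assoc, neg_mul] at h
      exact h
    -- bound on r
    have hrl := hr l hl0
    have hr1 : K^2 * Real.exp (-2*K*l) / (Real.cosh (K*l))^2 ≤ K^2 := by
      have he1 : Real.exp (-2*K*l) ≤ 1 :=
        Real.exp_le_one_iff.2 (by linarith [mul_nonneg hKpos.le hlnn])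
      have hc1 : (1:ℝ) ≤ (Real.cosh (K*l))^2 := by
        have h := Real.one_le_cosh (K*l)
        simpa using pow_le_pow_left₀ zero_le_one h 2
      rw [div_le_iff₀ (by positivity)]
      have u1 : K^2 * Real.exp (-2*K*l) ≤ K^2 * 1 :=
        mul_le_mul_of_nonneg_left he1 (sq_nonneg K)
      have u2 : K^2 * 1 ≤ K^2 * (Real.cosh (K*l))^2 :=
        mul_le_mul_of_nonneg_left hc1 (sq_nonneg K)
      linarith only [u1, u2]
    have hE3le1 : E3 ≤ 1 :=
      Real.exp_le_one_iff.2 (by linarith [mul_nonneg s3nn hlnn])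
    have hE83 : E8 ≤ E3 :=
      Real.exp_le_exp.2 (by linarith [mul_nonneg (show (0:ℝ) ≤ s8 - s3 by linarith) hlnn])
    have t2 : K^3 ≤ K^2 := pow_le_pow_of_le_one hKpos.le hK1 (by norm_num)
    have t3 : K^2 * E3 ≤ K^2 := mul_le_of_le_one_right (sq_nonneg K) hE3le1
    have hrb : |r l| ≤ 3*C*K^2 + C*E8 := by
      have hsum : K^2 * Real.exp (-2*K*l) / (Real.cosh (K*l))^2 + K^3 + K^2*E3 + E8
          ≤ 3*K^2 + E8 := by linarith only [hr1, t2, t3]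
      have h2' := mul_le_mul_of_nonneg_left hsum hC.le
      calc |r l| ≤ C * (K^2 * Real.exp (-2*K*l) / (Real.cosh (K*l))^2 + K^3
            + K^2*E3 + E8) := hrl
        _ ≤ C * (3*K^2 + E8) := h2'
        _ = 3*C*K^2 + C*E8 := by ring
    -- upper bound for K
    have hub : K ≤ C2 * E3 := by
      have h3CK : 3*C*K^2 ≤ K/2 := by
        rw [le_div_iff₀ (by positivity)] at hK6
        linarith only [mul_le_mul_of_nonneg_right hK6 hKpos.le]
      have hCE8 : C*E8 ≤ C*E3 := mul_le_mul_of_nonneg_left hE83 hC.le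
      have hKA : K ≤ K * A := by
        have h := mul_le_mul_of_nonneg_left hA1 hKpos.le
        linarith only [h]
      have hBq2 : c * Bq ≤ c * (2*E3) := mul_le_mul_of_nonneg_left hB2 hc.le
      have habs : r l ≤ |r l| := le_abs_self _
      have hstep : K ≤ 2*c*E3 + K/2 + C*E3 := by
        linarith only [hKA, hEq, hBq2, habs, hrb, h3CK, hCE8]
      rw [hC2def]; linarith only [hstep]
    -- lower bound for K
    have hlb : (c/4) * E3 ≤ K := by
      have h2K : c * Bq + r l ≤ 2*K := by
        rw [← hEq]
        have h := mul_le_mul_of_nonneg_left hA2 hKpos.le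
        linarith only [h]
      have hr2 : 3*C*K^2 ≤ (c/4)*E3 := by
        have hE3small : E3 * (4*(3*C*C2^2)) ≤ c := by
          have h' : Real.exp (-((2*s3)*l)) = E3 := by rw [hE3def]; congr 1; ring
          rw [h'] at hev4'
          rw [le_div_iff₀ (by positivity)] at hev4'
          linarith
        have s2c := mul_le_mul_of_nonneg_left
          (mul_le_mul hub hub hKpos.le (by positivity))
          (show (0:ℝ) ≤ 3*C by positivity)
        have hsm := mul_le_mul_of_nonneg_right hE3small hE3pos.le
        linarith only [s2c, hsm]
      have hr3 : C*E8 ≤ (c/4)*E3 := by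
        have hsplit : E8 = E3 * Real.exp (-((2*s8 - 2*s3)*l)) := by
          rw [hE3def, hE8def, ← Real.exp_add]; congr 1; ring
        have h := mul_le_mul_of_nonneg_left hev3' (show (0:ℝ) ≤ C * E3 by positivity)
        calc C*E8 = (C*E3) * Real.exp (-((2*s8 - 2*s3)*l)) := by rw [hsplit]; ring
          _ ≤ (C*E3) * (c/(4*C)) := h
          _ = (c/4)*E3 := by field_simp
      have hBq1 : c * E3 ≤ c * Bq := mul_le_mul_of_nonneg_left hB1 hc.le
      have habs : -(3*C*K^2 + C*E8) ≤ r l := by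
        have h := neg_abs_le (r l); linarith only [h, hrb]
      linarith only [h2K, hr2, hr3, hBq1, habs]
    refine ⟨⟨hlb, hub⟩, ?_⟩
    -- refined asymptotics
    have hE3sqE8 : E3^2 ≤ E8 := by
      rw [hE3def, hE8def, sq, ← Real.exp_add]
      refine Real.exp_le_exp.2 ?_
      have h := mul_nonneg (show (0:ℝ) ≤ 2*s3 - s8 by linarith) hlnn
      linarith only [h]
    have hkey : E3^2 * l ≤ E8 := by
      have h2 : l ≤ Real.exp l := by linarith [Real.add_one_le_exp l]
      calc E3^2 * l ≤ E3^2 * Real.exp l :=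
            mul_le_mul_of_nonneg_left h2 (by positivity)
        _ = Real.exp (l - 4*(s3*l)) := by
            rw [hE3def, sq, ← Real.exp_add, ← Real.exp_add]; congr 1; ring
        _ ≤ E8 := by
            rw [hE8def]
            refine Real.exp_le_exp.2 ?_
            have h := mul_nonneg (show (0:ℝ) ≤ 4*s3 - (1+2*s8) by linarith) hlnn
            linarith only [h]
    have ta : |K - K*A| ≤ 2*C2^2*E8 := by
      have s1 : K*A ≤ K*(1 + 2*(K*l)) := mul_le_mul_of_nonneg_left hA3 hKpos.le
      have s2 : K*K ≤ (C2*E3)*(C2*E3) := mul_le_mul hub hub hKpos.le (by positivity)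
      have s3' : K*K*l ≤ (C2*E3)*(C2*E3)*l := mul_le_mul_of_nonneg_right s2 hlnn
      have s4 : C2^2*(E3^2*l) ≤ C2^2*E8 := mul_le_mul_of_nonneg_left hkey (sq_nonneg C2)
      have hKA' : K ≤ K * A := by
        have h := mul_le_mul_of_nonneg_left hA1 hKpos.le
        linarith only [h]
      have hC2E8 : (0:ℝ) ≤ C2^2 * E8 := mul_nonneg (sq_nonneg C2) hE8pos.le
      rw [abs_le]
      constructor
      · linarith only [s1, s3', s4]
      · linarith only [hKA', hC2E8]
    have tb : |c*Bq - 2*c*E3| ≤ 2*c*E8 := by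
      have hE3sqE8' : E3^2 ≤ E8 := hE3sqE8
      calc |c*Bq - 2*c*E3| = c * |Bq - 2*E3| := by
            rw [show c*Bq - 2*c*E3 = c*(Bq - 2*E3) by ring, abs_mul, abs_of_pos hc]
        _ ≤ c * (2*E3^2) := mul_le_mul_of_nonneg_left hB3 hc.le
        _ ≤ 2*c*E8 := by
            have h := mul_le_mul_of_nonneg_left hE3sqE8 hc.le
            linarith only [h]
    have tr : |r l| ≤ (3*C*C2^2 + C)*E8 := by
      have s2 : K*K ≤ (C2*E3)*(C2*E3) := mul_le_mul hub hub hKpos.le (by positivity)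
      have s2c := mul_le_mul_of_nonneg_left s2 (show (0:ℝ) ≤ 3*C by positivity)
      have s2d := mul_le_mul_of_nonneg_left hE3sqE8
        (show (0:ℝ) ≤ 3*C*C2^2 by positivity)
      linarith only [hrb, s2c, s2d]
    have hdiff : K - 2*c*E3 = (K - K*A) + (c*Bq - 2*c*E3) + r l := by
      linear_combination hEq
    calc |K - 2*c*E3| = |(K - K*A) + (c*Bq - 2*c*E3) + r l| := by rw [hdiff]
      _ ≤ |K - K*A| + |c*Bq - 2*c*E3| + |r l| := abs_add_three _ _ _
      _ ≤ C3 * E8 := by rw [hC3def]; linarith only [ta, tb, tr]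
  obtain ⟨L, hL⟩ := eventually_atTop.mp main
  refine ⟨⟨c/4, by positivity, C2, hC2, L, fun l hl => (hL l hl).1⟩,
    ⟨C3, L, fun l hl => (hL l hl).2⟩⟩
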